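/- Let φ : B(H) → B(H) be an additive map whose range contains all operators of rank at most two, and suppose H_{φ(T)φ(S)*}({λ}) = H_{TS*}({λ}) for all T, S ∈ B(H) and all λ ∈ ℂ. Then there exist a unitary operator V ∈ B(H) and a nonzero scalar μ such that φ(T) = μ T V* for all T ∈ B(H). -/

import Mathlib

open scoped InnerProductSpace Pointwise
open ContinuousLinearMap

variable {H : Type*} [NormedAddCommGroup H] [InnerProductSpace ℂ H] [CompleteSpace H]

/-- The local resolvent set of `T` at `x`. -/
def localResolvent (T : H →L[ℂ] H) (x : H) : Set ℂ :=
  {μ | ∃ U : Set ℂ, IsOpen U ∧ μ ∈ U ∧ ∃ f : ℂ → H, AnalyticOnNhd ℂ f U ∧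
      ∀ z ∈ U, z • f z - T (f z) = x}

/-- The local spectrum of `T` at `x`. -/
def localSpectrum (T : H →L[ℂ] H) (x : H) : Set ℂ := (localResolvent T x)ᶜ

/-- The local spectral subspace `H_T(F)`. -/
def localSubspace (T : H →L[ℂ] H) (F : Set ℂ) : Set H :=
  {x | localSpectrum T x ⊆ F}

/-- The rank-one operator `x ⊗ y : z ↦ ⟨z,y⟩x` (inner product conjugate-linear in
the second variable, i.e. `⟪y, z⟫` in Mathlib's convention). -/
noncomputable def rankOne (x y : H) : H →L[ℂ] H := (innerSL ℂ y).smulRight x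

/-- The single-valued extension property. -/
def HasSVEP (T : H →L[ℂ] H) : Prop :=
  ∀ U : Set ℂ, IsOpen U → ∀ f : ℂ → H, AnalyticOnNhd ℂ f U →
    (∀ μ ∈ U, μ • f μ - T (f μ) = 0) → ∀ μ ∈ U, f μ = 0

set_option linter.unusedSectionVars false

section Aux

lemma mem_localSubspace {T : H →L[ℂ] H} {F : Set ℂ} {x : H} :
    x ∈ localSubspace T F ↔ ∀ μ : ℂ, μ ∉ F → μ ∈ localResolvent T x := by
  constructor
  · intro h μ hμ; by_contra hc; exact hμ (h hc)
  · intro h μ hμ; by_contra hc; exact hμ (h μ hc)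

/-- Pointwise consequence of membership in a local spectral subspace. -/
lemma exists_of_mem_localSubspace {T : H →L[ℂ] H} {F : Set ℂ} {x : H}
    (hx : x ∈ localSubspace T F) {μ : ℂ} (hμ : μ ∉ F) : ∃ w, μ • w - T w = x := by
  obtain ⟨U, _, hμU, f, _, heq⟩ := mem_localSubspace.mp hx μ hμ
  exact ⟨f μ, heq μ hμU⟩

/-- Eigenvectors lie in the corresponding local spectral subspace. -/
lemma eigen_mem_localSubspace {T : H →L[ℂ] H} {x : H} {t : ℂ} (h : T x = t • x) :
    x ∈ localSubspace T {t} := by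
  rw [mem_localSubspace]
  intro μ hμ
  refine ⟨{z | z ≠ t}, isOpen_ne, hμ, fun z => (z - t)⁻¹ • x, ?_, ?_⟩
  · exact (((analyticOnNhd_id).sub analyticOnNhd_const).inv
      (fun z hz => sub_ne_zero.mpr hz)).smul analyticOnNhd_const
  · intro z hz
    rw [map_smul, h, smul_smul, smul_comm, smul_smul, ← sub_smul, ← sub_mul,
      mul_inv_cancel₀ (sub_ne_zero.mpr hz), one_smul]

lemma smul_mem_localSubspace {T : H →L[ℂ] H} {F : Set ℂ} {x : H}
    (hx : x ∈ localSubspace T F) (γ : ℂ) : γ • x ∈ localSubspace T F := by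
  rw [mem_localSubspace] at hx ⊢
  intro μ hμ
  obtain ⟨U, hU, hμU, f, hf, heq⟩ := hx μ hμ
  refine ⟨U, hU, hμU, fun z => γ • f z, analyticOnNhd_const.smul hf, fun z hz => ?_⟩
  rw [map_smul, smul_comm, ← smul_sub, heq z hz]

lemma mem_localSubspace_of_two {T : H →L[ℂ] H} {x : H} {s t : ℂ} (hst : s ≠ t)
    (hs : x ∈ localSubspace T {s}) (ht : x ∈ localSubspace T {t}) (F : Set ℂ) :
    x ∈ localSubspace T F := by
  intro μ hμ
  exfalso
  have h1 := hs hμ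
  have h2 := ht hμ
  simp only [Set.mem_singleton_iff] at h1 h2
  exact hst (h1 ▸ h2 ▸ rfl)

/-- If `A² = c•A` with `c ≠ 0`, then the local subspace at `{l}` is trivial
for `l ∉ {0, c}`. -/
lemma pat1 {A : H →L[ℂ] H} {c : ℂ} (hc : c ≠ 0) (hA : A * A = c • A)
    {l : ℂ} (h0 : l ≠ 0) (hlc : l ≠ c) {x : H} (hx : x ∈ localSubspace A {l}) : x = 0 := by
  obtain ⟨w₁, hw₁⟩ := exists_of_mem_localSubspace hx (by simp [h0.symm] : (0:ℂ) ∉ ({l} : Set ℂ))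
  obtain ⟨w₂, hw₂⟩ := exists_of_mem_localSubspace hx (by simp [Ne.symm hlc] : c ∉ ({l} : Set ℂ))
  have hx1 : x = -(A w₁) := by rw [← hw₁, zero_smul, zero_sub]
  have hAA : ∀ w, A (A w) = c • A w := by
    intro w
    have := congrArg (fun B => B w) hA
    simpa only [ContinuousLinearMap.mul_apply, smul_apply] using this
  have hAx : A x = c • x := by
    rw [hx1, map_neg, hAA, smul_neg]
  have hAx0 : A x = 0 := by
    have := congrArg A hw₂
    rw [map_sub, map_smul, hAA, sub_self] at this
    exact this.symm
  rw [hAx0] at hAx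
  exact (smul_eq_zero.mp hAx.symm).resolve_left hc

/-- If `A² = 0`, then the local subspace at `{l}` is trivial for `l ≠ 0`. -/
lemma pat2 {A : H →L[ℂ] H} (hA : A * A = 0)
    {l : ℂ} (h0 : l ≠ 0) {x : H} (hx : x ∈ localSubspace A {l}) : x = 0 := by
  obtain ⟨U, hU, h0U, f, hf, heq⟩ := mem_localSubspace.mp hx 0 (by simp [h0.symm])
  have hAA : ∀ w, A (A w) = 0 := by
    intro w
    have := congrArg (fun B => B w) hA
    simpa only [ContinuousLinearMap.mul_apply, zero_apply] using this
  have hkey : ∀ z ∈ U, z • A (f z) = A x := by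
    intro z hz
    have := congrArg A (heq z hz)
    rwa [map_sub, map_smul, hAA, sub_zero] at this
  have hAx : A x = 0 := by
    have := hkey 0 h0U
    rw [zero_smul] at this
    exact this.symm
  have hAf : ∀ z ∈ U, z ≠ 0 → A (f z) = 0 := by
    intro z hz hz0
    have := hkey z hz
    rw [hAx] at this
    exact (smul_eq_zero.mp this).resolve_left hz0
  have hcont : ContinuousAt (fun z => A (f z)) 0 :=
    (A.continuous.continuousAt).comp (hf 0 h0U).continuousAt
  have hev : (fun z => A (f z)) =ᶠ[nhdsWithin 0 {(0:ℂ)}ᶜ] (fun _ => (0:H)) := by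
    have hUnhds : U ∈ nhdsWithin (0:ℂ) {(0:ℂ)}ᶜ :=
      nhdsWithin_le_nhds (hU.mem_nhds h0U)
    filter_upwards [hUnhds, self_mem_nhdsWithin] with z hz hz0
    exact hAf z hz hz0
  have hAf0 : A (f 0) = 0 := by
    have h1 : Filter.Tendsto (fun z => A (f z)) (nhdsWithin 0 {(0:ℂ)}ᶜ) (nhds (A (f 0))) :=
      (hcont.tendsto).mono_left nhdsWithin_le_nhds
    have h2 : Filter.Tendsto (fun z => A (f z)) (nhdsWithin 0 {(0:ℂ)}ᶜ) (nhds 0) := by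
      rw [Filter.tendsto_congr' hev]
      exact tendsto_const_nhds
    exact tendsto_nhds_unique h1 h2
  have := heq 0 h0U
  rw [zero_smul, zero_sub, hAf0, neg_zero] at this
  exact this.symm

lemma rankOne_apply (x y z : H) : rankOne x y z = ⟪y, z⟫_ℂ • x := by
  simp [rankOne]

lemma adjoint_rankOne (x y : H) : adjoint (rankOne x y) = rankOne y x := by
  ext z
  refine ext_inner_right ℂ (fun w => ?_)
  rw [adjoint_inner_left]
  simp only [rankOne_apply, inner_smul_left, inner_smul_right]
  rw [inner_conj_symm]
  ring

lemma rankOne_comp_rankOne (x y u v : H) :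
    rankOne x y * rankOne u v = ⟪y, u⟫_ℂ • rankOne x v := by
  ext z
  simp only [ContinuousLinearMap.mul_apply, rankOne_apply, coe_smul', Pi.smul_apply, inner_smul_right, smul_smul]
  ring_nf

lemma comp_rankOne (A : H →L[ℂ] H) (x y : H) : A * rankOne x y = rankOne (A x) y := by
  ext z
  simp [mul_apply, rankOne_apply]

lemma rankOne_cancel {u y y' : H} (hu : u ≠ 0) (h : rankOne u y = rankOne u y') : y = y' := by
  have h2 : ∀ z, ⟪y - y', z⟫_ℂ • u = 0 := by
    intro z
    have := congrArg (fun A => A z) h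
    simp only [rankOne_apply] at this
    rw [inner_sub_left, sub_smul, this, sub_self]
  have h3 : y - y' = 0 := by
    by_contra hne
    rcases smul_eq_zero.mp (h2 (y - y')) with h4 | h4
    · exact hne (inner_self_eq_zero.mp h4)
    · exact hu h4
  exact sub_eq_zero.mp h3

lemma rankOne_zero_right (x : H) : rankOne x 0 = 0 := by
  ext z; simp [rankOne_apply]

lemma rankOne_zero_left (y : H) : rankOne 0 y = 0 := by
  ext z; simp [rankOne_apply]

lemma rankOne_add_left (u u' b : H) : rankOne (u + u') b = rankOne u b + rankOne u' b := by
  ext z; simp [rankOne_apply, smul_add]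

lemma rankOne_ne_zero {u y : H} (hu : u ≠ 0) (hy : y ≠ 0) : rankOne u y ≠ 0 := by
  intro h
  have := congrArg (fun A => A y) h
  simp only [rankOne_apply, zero_apply] at this
  rcases smul_eq_zero.mp this with h4 | h4
  · exact hy (inner_self_eq_zero.mp h4)
  · exact hu h4

lemma finrank_range_rankOne_le (a b : H) :
    Module.finrank ℂ (LinearMap.range ((rankOne a b : H →L[ℂ] H) : H →ₗ[ℂ] H)) ≤ 2 := by
  have hle : LinearMap.range ((rankOne a b : H →L[ℂ] H) : H →ₗ[ℂ] H)
      ≤ Submodule.span ℂ {a} := by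
    rintro z ⟨w, rfl⟩
    have : (rankOne a b) w = ⟪b, w⟫_ℂ • a := rankOne_apply a b w
    simp only [ContinuousLinearMap.coe_coe, this]
    exact Submodule.smul_mem _ _ (Submodule.mem_span_singleton_self a)
  calc Module.finrank ℂ (LinearMap.range ((rankOne a b : H →L[ℂ] H) : H →ₗ[ℂ] H))
      ≤ Module.finrank ℂ (Submodule.span ℂ ({a} : Set H)) := Submodule.finrank_mono hle
    _ ≤ 2 := by
        by_cases ha : a = 0
        · subst ha
          rw [Submodule.span_zero_singleton, finrank_bot]
          norm_num
        · rw [finrank_span_singleton ha]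
          norm_num

lemma notmem_singleton_of_ne {c l : ℂ} (h : l ≠ c) : l ∉ ({c} : Set ℂ) := by
  simp only [Set.mem_singleton_iff]
  exact h

lemma inner_normalizer {v : H} (hv : v ≠ 0) : ⟪(⟪v, v⟫_ℂ)⁻¹ • v, v⟫_ℂ = 1 := by
  rw [inner_smul_left, map_inv₀, inner_self_conj]
  exact inv_mul_cancel₀ (inner_self_ne_zero.mpr hv)

/-- Comparison of scalar multiples of a fixed rank-one projection-like operator. -/
lemma scal {e : H} (he : e ≠ 0) {α α' : ℂ}
    (h : ∀ l : ℂ, localSubspace (α • rankOne e e) {l} = localSubspace (α' • rankOne e e) {l}) :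
    α = α' := by
  by_contra hne
  have hee : ⟪e, e⟫_ℂ ≠ 0 := inner_self_ne_zero.mpr he
  have heig : ∀ β : ℂ, (β • rankOne e e) e = (β * ⟪e, e⟫_ℂ) • e := by
    intro β
    simp only [smul_apply, rankOne_apply, smul_smul]
  have hsq : ∀ β : ℂ, β ≠ 0 → (β • rankOne e e) * (β • rankOne e e)
      = (β * ⟪e, e⟫_ℂ) • (β • rankOne e e) := by
    intro β _
    rw [smul_mul_assoc, mul_smul_comm, rankOne_comp_rankOne, smul_smul, smul_smul, smul_smul]
    ring_nf
  by_cases hα : α = 0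
  · have hα' : α' ≠ 0 := fun hc => hne (hα.trans hc.symm)
    have hmem : e ∈ localSubspace (α' • rankOne e e) {α' * ⟪e, e⟫_ℂ} :=
      eigen_mem_localSubspace (heig α')
    rw [← h _] at hmem
    rw [hα, zero_smul] at hmem
    obtain ⟨w, hw⟩ := exists_of_mem_localSubspace hmem
      (notmem_singleton_of_ne (fun hc => (mul_ne_zero hα' hee) hc.symm))
    simp only [zero_smul, zero_apply, sub_zero] at hw
    exact he hw.symm
  · have hmem : e ∈ localSubspace (α • rankOne e e) {α * ⟪e, e⟫_ℂ} :=
      eigen_mem_localSubspace (heig α)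
    rw [h _] at hmem
    by_cases hα' : α' = 0
    · rw [hα', zero_smul] at hmem
      obtain ⟨w, hw⟩ := exists_of_mem_localSubspace hmem
        (notmem_singleton_of_ne (fun hc => (mul_ne_zero hα hee) hc.symm))
      simp only [zero_smul, zero_apply, sub_zero] at hw
      exact he hw.symm
    · have := pat1 (mul_ne_zero hα' hee) (hsq α' hα')
        (mul_ne_zero hα hee)
        (by
          intro hc
          exact hne (mul_right_cancel₀ hee hc))
        hmem
      exact he this

/-- If two vectors give rank one operators with the same local spectral subspaces
against every `p`, they are equal. -/
lemma Lleft {a a' : H}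
    (h : ∀ p : H, p ≠ 0 → ∀ l : ℂ,
      localSubspace (rankOne a p) {l} = localSubspace (rankOne a' p) {l}) : a = a' := by
  by_cases ha : a = 0
  · by_cases ha' : a' = 0
    · rw [ha, ha']
    · exfalso
      have hp : (⟪a', a'⟫_ℂ)⁻¹ • a' ≠ 0 :=
        smul_ne_zero (inv_ne_zero (inner_self_ne_zero.mpr ha')) ha'
      set p := (⟪a', a'⟫_ℂ)⁻¹ • a' with hpdef
      have heig : rankOne a' p a' = (1:ℂ) • a' := by
        rw [rankOne_apply, hpdef, inner_normalizer ha']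
      have hmem : a' ∈ localSubspace (rankOne a' p) {(1:ℂ)} := eigen_mem_localSubspace heig
      rw [← h p hp 1] at hmem
      obtain ⟨w, hw⟩ := exists_of_mem_localSubspace hmem
        (by norm_num : (0:ℂ) ∉ ({(1:ℂ)} : Set ℂ))
      rw [ha, rankOne_zero_left] at hw
      simp only [zero_smul, zero_apply, sub_zero] at hw
      exact ha' hw.symm
  · have hp : (⟪a, a⟫_ℂ)⁻¹ • a ≠ 0 :=
      smul_ne_zero (inv_ne_zero (inner_self_ne_zero.mpr ha)) ha
    set p := (⟪a, a⟫_ℂ)⁻¹ • a with hpdef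
    have hpa : ⟪p, a⟫_ℂ = 1 := by rw [hpdef]; exact inner_normalizer ha
    have heig : rankOne a p a = (1:ℂ) • a := by rw [rankOne_apply, hpa]
    have hmem : a ∈ localSubspace (rankOne a p) {(1:ℂ)} := eigen_mem_localSubspace heig
    rw [h p hp 1] at hmem
    obtain ⟨w, hw⟩ := exists_of_mem_localSubspace hmem
      (by norm_num : (0:ℂ) ∉ ({(1:ℂ)} : Set ℂ))
    have hw2 : a = (-⟪p, w⟫_ℂ) • a' := by
      rw [← hw, zero_smul, zero_sub, rankOne_apply, neg_smul]
    set γ := -⟪p, w⟫_ℂ with hγdef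
    have hγ : γ ≠ 0 := by
      intro hc
      rw [hc, zero_smul] at hw2
      exact ha hw2
    have ha' : a' ≠ 0 := by
      intro hc
      rw [hc, smul_zero] at hw2
      exact ha hw2
    have ha'eq : a' = γ⁻¹ • a := by
      rw [hw2, smul_smul, inv_mul_cancel₀ hγ, one_smul]
    set δ := γ⁻¹ with hδdef
    have hδ0 : δ ≠ 0 := inv_ne_zero hγ
    have hc' : ⟪p, a'⟫_ℂ = δ := by
      rw [ha'eq, inner_smul_right, hpa, mul_one]
    by_cases hδ1 : δ = 1
    · rw [ha'eq, hδ1, one_smul]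
    · exfalso
      have heig' : rankOne a' p a' = δ • a' := by rw [rankOne_apply, hc']
      have hm1 : a' ∈ localSubspace (rankOne a' p) {δ} := eigen_mem_localSubspace heig'
      have hm2 : a' ∈ localSubspace (rankOne a' p) {(1:ℂ)} := by
        have := smul_mem_localSubspace hmem δ
        rwa [← ha'eq] at this
      have hm3 : a' ∈ localSubspace (rankOne a' p) {(if δ = 2 then (3:ℂ) else 2)} :=
        mem_localSubspace_of_two (fun hc => hδ1 hc.symm) hm2 hm1 _
      have hsq : rankOne a' p * rankOne a' p = δ • rankOne a' p := by
        rw [rankOne_comp_rankOne, hc']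
      have hl0 : (if δ = 2 then (3:ℂ) else 2) ≠ 0 := by
        split <;> norm_num
      have hlδ2 : (if δ = 2 then (3:ℂ) else 2) ≠ δ := by
        split
        · rename_i hh; rw [hh]; norm_num
        · rename_i hh; exact fun hc => hh hc.symm
      exact ha' (pat1 hδ0 hsq hl0 hlδ2 hm3)

end Aux

lemma indep_aux {u v : H} (hu : u ≠ 0) (h : ∀ s : ℂ, v ≠ s • u) :
    ∀ s t : ℂ, s • u + t • v = 0 → s = 0 ∧ t = 0 := by
  intro s t hst
  by_cases ht : t = 0
  · subst ht
    rw [zero_smul, add_zero] at hst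
    exact ⟨(smul_eq_zero.mp hst).resolve_right hu, rfl⟩
  · exfalso
    have h5 : t • v = -(s • u) := eq_neg_of_add_eq_zero_right hst
    apply h (-(t⁻¹ * s))
    calc v = t⁻¹ • (t • v) := by rw [smul_smul, inv_mul_cancel₀ ht, one_smul]
    _ = t⁻¹ • (-(s • u)) := by rw [h5]
    _ = (-(t⁻¹ * s)) • u := by rw [smul_neg, smul_smul, neg_smul]

set_option maxHeartbeats 2000000 in
theorem stmt16 (hH : ¬ FiniteDimensional ℂ H)
    (φ : (H →L[ℂ] H) → (H →L[ℂ] H))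
    (hadd : ∀ T S : H →L[ℂ] H, φ (T + S) = φ T + φ S)
    (hrange : ∀ R : H →L[ℂ] H,
      Module.finrank ℂ (LinearMap.range (R : H →ₗ[ℂ] H)) ≤ 2 → ∃ T, φ T = R)
    (hloc : ∀ (T S : H →L[ℂ] H) (lam : ℂ),
      localSubspace (φ T * ContinuousLinearMap.adjoint (φ S)) {lam}
        = localSubspace (T * ContinuousLinearMap.adjoint S) {lam}) :
    ∃ V : H →L[ℂ] H,
      (ContinuousLinearMap.adjoint V * V = 1 ∧ V * ContinuousLinearMap.adjoint V = 1) ∧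
      ∃ μ : ℂ, μ ≠ 0 ∧
        ∀ T : H →L[ℂ] H, φ T = μ • (T * ContinuousLinearMap.adjoint V) := by
  classical
  -- φ 0 = 0
  have hphi0 : φ 0 = 0 := by
    have h := hadd 0 0
    rw [add_zero] at h
    exact (left_eq_add.mp h)
  -- a nonzero vector
  have hexe : ∃ e : H, e ≠ 0 := by
    by_contra hc
    push_neg at hc
    have hsub : Subsingleton H := ⟨fun a b => by rw [hc a, hc b]⟩
    exact hH (by infer_instance)
  obtain ⟨e₀, he₀⟩ := hexe
  -- vectors outside any line
  have hout : ∀ u : H, u ≠ 0 → ∃ v : H, ∀ s : ℂ, v ≠ s • u := by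
    intro u hu
    by_contra hc
    push_neg at hc
    have hspan : (⊤ : Submodule ℂ H) ≤ Submodule.span ℂ {u} := by
      intro v _
      obtain ⟨s, rfl⟩ := hc v
      exact Submodule.smul_mem _ _ (Submodule.mem_span_singleton_self u)
    have hfin : FiniteDimensional ℂ H := ⟨⟨{u}, by
      rw [Finset.coe_singleton]
      exact le_antisymm le_top hspan⟩⟩
    exact hH hfin
  -- preimages of rank-one operators
  have hpre : ∀ a b : H, ∃ S, φ S = rankOne a b :=
    fun a b => hrange _ (finrank_range_rankOne_le a b)
  -- range inclusion: φ T x ∈ ran T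
  have hran : ∀ (T : H →L[ℂ] H) (x : H), ∃ k, φ T x = T k := by
    intro T x
    by_cases hw : φ T x = 0
    · exact ⟨0, by rw [hw, map_zero]⟩
    · obtain ⟨S, hS⟩ := hpre ((⟪φ T x, φ T x⟫_ℂ)⁻¹ • (φ T x)) x
      have hadjS : adjoint (φ S) = rankOne x ((⟪φ T x, φ T x⟫_ℂ)⁻¹ • (φ T x)) := by
        rw [hS, adjoint_rankOne]
      have hBw : (φ T * adjoint (φ S)) (φ T x) = (1:ℂ) • (φ T x) := by
        rw [ContinuousLinearMap.mul_apply, hadjS, rankOne_apply, inner_normalizer hw, one_smul, one_smul]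
      have hmem := eigen_mem_localSubspace hBw
      rw [hloc T S 1] at hmem
      obtain ⟨k', hk'⟩ := exists_of_mem_localSubspace hmem
        (notmem_singleton_of_ne (zero_ne_one))
      refine ⟨-(adjoint S k'), ?_⟩
      rw [map_neg]
      rw [← hk', zero_smul, zero_sub, ContinuousLinearMap.mul_apply]
  -- structure of φ on rank-one operators
  have hstruct : ∀ u b : H, u ≠ 0 → b ≠ 0 →
      ∃ y, y ≠ 0 ∧ φ (rankOne u b) = rankOne u y := by
    intro u b hu hb
    have hee : ⟪u, u⟫_ℂ ≠ 0 := inner_self_ne_zero.mpr hu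
    have hrep : φ (rankOne u b)
        = rankOne u ((⟪u,u⟫_ℂ)⁻¹ • (adjoint (φ (rankOne u b)) u)) := by
      ext x
      obtain ⟨k, hk⟩ := hran (rankOne u b) x
      have hk2 : φ (rankOne u b) x = ⟪b, k⟫_ℂ • u := by rw [hk, rankOne_apply]
      have hR : rankOne u ((⟪u,u⟫_ℂ)⁻¹ • (adjoint (φ (rankOne u b)) u)) x
          = ⟪b, k⟫_ℂ • u := by
        rw [rankOne_apply, inner_smul_left, map_inv₀, inner_self_conj,
          adjoint_inner_left, hk2, inner_smul_right]
        congr 1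
        field_simp
      rw [hR, hk2]
    -- φ (rankOne u b) ≠ 0
    have hTnz : φ (rankOne u b) ≠ 0 := by
      have hTT : rankOne u b * adjoint (rankOne u b) = ⟪b,b⟫_ℂ • rankOne u u := by
        rw [adjoint_rankOne, rankOne_comp_rankOne]
      have heig : (rankOne u b * adjoint (rankOne u b)) u
          = (⟪b,b⟫_ℂ * ⟪u,u⟫_ℂ) • u := by
        rw [hTT]
        simp only [smul_apply, rankOne_apply, smul_smul]
      have hmem := eigen_mem_localSubspace heig
      rw [← hloc (rankOne u b) (rankOne u b) _] at hmem
      obtain ⟨k', hk'⟩ := exists_of_mem_localSubspace hmem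
        (notmem_singleton_of_ne
          (fun hc => (mul_ne_zero (inner_self_ne_zero.mpr hb) hee) hc.symm))
      intro hc
      rw [hc] at hk'
      simp only [zero_smul, zero_sub, ContinuousLinearMap.mul_apply, zero_apply, neg_zero] at hk'
      exact hu hk'.symm
    refine ⟨(⟪u,u⟫_ℂ)⁻¹ • (adjoint (φ (rankOne u b)) u), ?_, hrep⟩
    intro hy0
    rw [hy0, rankOne_zero_right] at hrep
    exact hTnz hrep
  -- additivity comparison
  have hYadd : ∀ (u u' b yu yu' : H),
      (∀ s t : ℂ, s • u + t • u' = 0 → s = 0 ∧ t = 0) → b ≠ 0 →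
      φ (rankOne u b) = rankOne u yu → φ (rankOne u' b) = rankOne u' yu' → yu = yu' := by
    intro u u' b yu yu' hind hb h1 h2
    have hne : u + u' ≠ 0 := by
      intro hc
      have := hind 1 1 (by rw [one_smul, one_smul]; exact hc)
      exact one_ne_zero this.1
    obtain ⟨y'', _, h3⟩ := hstruct (u + u') b hne hb
    have hsum : rankOne (u+u') y'' = rankOne u yu + rankOne u' yu' := by
      rw [← h3, ← h1, ← h2, ← hadd, ← rankOne_add_left]
    have hcoef : ∀ x : H, (⟪y'' - yu, x⟫_ℂ) • u + (⟪y'' - yu', x⟫_ℂ) • u' = 0 := by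
      intro x
      have happ := congrArg (fun A : H →L[ℂ] H => A x) hsum
      simp only [rankOne_apply, ContinuousLinearMap.add_apply] at happ
      have happ2 : ⟪y'',x⟫_ℂ • u + ⟪y'',x⟫_ℂ • u' = ⟪yu,x⟫_ℂ • u + ⟪yu',x⟫_ℂ • u' := by
        rw [← smul_add]
        exact happ
      calc (⟪y'' - yu, x⟫_ℂ) • u + (⟪y'' - yu', x⟫_ℂ) • u'
          = (⟪y'',x⟫_ℂ • u + ⟪y'',x⟫_ℂ • u') - (⟪yu,x⟫_ℂ • u + ⟪yu',x⟫_ℂ • u') := by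
            rw [inner_sub_left, inner_sub_left, sub_smul, sub_smul]
            abel
      _ = 0 := by rw [happ2, sub_self]
    have hy1 : y'' = yu := by
      have hz : ∀ x, ⟪y'' - yu, x⟫_ℂ = 0 := fun x => (hind _ _ (hcoef x)).1
      exact sub_eq_zero.mp (inner_self_eq_zero.mp (hz (y'' - yu)))
    have hy2 : y'' = yu' := by
      have hz : ∀ x, ⟪y'' - yu', x⟫_ℂ = 0 := fun x => (hind _ _ (hcoef x)).2
      exact sub_eq_zero.mp (inner_self_eq_zero.mp (hz (y'' - yu')))
    rw [← hy1, hy2]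
  -- independence of the left slot
  have hYeq_any : ∀ (u u' b yu yu' : H), u ≠ 0 → u' ≠ 0 → b ≠ 0 →
      φ (rankOne u b) = rankOne u yu → φ (rankOne u' b) = rankOne u' yu' → yu = yu' := by
    intro u u' b yu yu' hu hu' hb h1 h2
    by_cases hdep : ∃ s : ℂ, u' = s • u
    · obtain ⟨v, hv⟩ := hout u hu
      have hv0 : v ≠ 0 := fun hc => hv 0 (by rw [hc, zero_smul])
      obtain ⟨yv, _, h3⟩ := hstruct v b hv0 hb
      have hind1 := indep_aux hu hv
      have e1 : yu = yv := hYadd u v b yu yv hind1 hb h1 h3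
      obtain ⟨s₀, hs₀⟩ := hdep
      have hs₀0 : s₀ ≠ 0 := fun hc => hu' (by rw [hs₀, hc, zero_smul])
      have hind2 : ∀ s t : ℂ, s • u' + t • v = 0 → s = 0 ∧ t = 0 := by
        intro s t hst
        rw [hs₀, smul_smul] at hst
        have hr := hind1 _ _ hst
        exact ⟨(mul_eq_zero.mp hr.1).resolve_right hs₀0, hr.2⟩
      have e2 : yu' = yv := hYadd u' v b yu' yv hind2 hb h2 h3
      rw [e1, e2]
    · push_neg at hdep
      exact hYadd u u' b yu yu' (indep_aux hu hdep) hb h1 h2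
  -- the map ν
  have hstruct' : ∀ q : H, ∃ y : H,
      (q ≠ 0 → y ≠ 0 ∧ φ (rankOne e₀ q) = rankOne e₀ y) ∧ (q = 0 → y = 0) := by
    intro q
    by_cases hq : q = 0
    · exact ⟨0, fun hc => absurd hq hc, fun _ => rfl⟩
    · obtain ⟨y, hy, he⟩ := hstruct e₀ q he₀ hq
      exact ⟨y, fun _ => ⟨hy, he⟩, fun hc => absurd hc hq⟩
  choose ν hν1 hν2 using hstruct'
  have hν0 : ν 0 = 0 := hν2 0 rfl
  have hphiRank : ∀ p q : H, p ≠ 0 → q ≠ 0 → φ (rankOne p q) = rankOne p (ν q) := by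
    intro p q hp hq
    obtain ⟨y, _, he⟩ := hstruct p q hp hq
    have hyq : y = ν q := hYeq_any p e₀ q y (ν q) hp he₀ hq he (hν1 q hq).2
    rw [he, hyq]
  -- inner product preservation
  have hkey : ∀ a b : H, ⟪ν a, ν b⟫_ℂ = ⟪a, b⟫_ℂ := by
    intro a b
    by_cases ha : a = 0
    · rw [ha, hν0, inner_zero_left, inner_zero_left]
    · by_cases hb : b = 0
      · rw [hb, hν0, inner_zero_right, inner_zero_right]
      · have h1 := (hν1 a ha).2
        have h2 := (hν1 b hb).2
        have hL : φ (rankOne e₀ a) * adjoint (φ (rankOne e₀ b))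
            = ⟪ν a, ν b⟫_ℂ • rankOne e₀ e₀ := by
          rw [h1, h2, adjoint_rankOne, rankOne_comp_rankOne]
        have hR : rankOne e₀ a * adjoint (rankOne e₀ b) = ⟪a, b⟫_ℂ • rankOne e₀ e₀ := by
          rw [adjoint_rankOne, rankOne_comp_rankOne]
        apply scal he₀
        intro l
        rw [← hL, ← hR]
        exact hloc _ _ l
  -- surjectivity of ν
  have hsurjν : ∀ y : H, y ≠ 0 → ∃ b : H, b ≠ 0 ∧ ν b = y := by
    intro y hy
    obtain ⟨S, hS⟩ := hpre e₀ y
    have hadjS : adjoint (φ S) = rankOne y e₀ := by rw [hS, adjoint_rankOne]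
    have hker : ∀ x : H, ⟪e₀, x⟫_ℂ = 0 → adjoint S x = 0 := by
      intro x hx
      by_contra hw
      have hxne : x ≠ 0 := fun hc => hw (by rw [hc, map_zero])
      have h2 : ∀ T : H →L[ℂ] H, x ∈ localSubspace (T * adjoint S) {(0:ℂ)} := by
        intro T
        rw [← hloc T S 0]
        have hop : φ T * adjoint (φ S) = rankOne (φ T y) e₀ := by
          rw [hadjS, comp_rankOne]
        rw [hop]
        apply eigen_mem_localSubspace (t := 0)
        rw [rankOne_apply, hx, zero_smul, zero_smul]
      have h3 : (rankOne x ((⟪adjoint S x, adjoint S x⟫_ℂ)⁻¹ • adjoint S x) * adjoint S) x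
          = (1:ℂ) • x := by
        rw [ContinuousLinearMap.mul_apply, rankOne_apply, inner_normalizer hw, one_smul]
      have h3m := eigen_mem_localSubspace h3
      have h2m := h2 (rankOne x ((⟪adjoint S x, adjoint S x⟫_ℂ)⁻¹ • adjoint S x))
      have hall : ∀ F : Set ℂ,
          x ∈ localSubspace
            (rankOne x ((⟪adjoint S x, adjoint S x⟫_ℂ)⁻¹ • adjoint S x) * adjoint S) F :=
        fun F => mem_localSubspace_of_two zero_ne_one h2m h3m F
      set T₀ := rankOne x ((⟪adjoint S x, adjoint S x⟫_ℂ)⁻¹ • adjoint S x) with hT₀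
      have hop : φ T₀ * adjoint (φ S) = rankOne (φ T₀ y) e₀ := by
        rw [hadjS, comp_rankOne]
      set c := ⟪e₀, φ T₀ y⟫_ℂ with hcdef
      have hsq : rankOne (φ T₀ y) e₀ * rankOne (φ T₀ y) e₀ = c • rankOne (φ T₀ y) e₀ := by
        rw [rankOne_comp_rankOne]
      by_cases hc0 : c = 0
      · have hm : x ∈ localSubspace (rankOne (φ T₀ y) e₀) {(1:ℂ)} := by
          have hmm := hall {(1:ℂ)}
          rw [← hloc T₀ S 1, hop] at hmm
          exact hmm
        have hn : rankOne (φ T₀ y) e₀ * rankOne (φ T₀ y) e₀ = 0 := by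
          rw [hsq, hc0, zero_smul]
        exact hxne (pat2 hn one_ne_zero hm)
      · have hm : x ∈ localSubspace (rankOne (φ T₀ y) e₀) {(if c = 1 then (2:ℂ) else 1)} := by
          have hmm := hall {(if c = 1 then (2:ℂ) else 1)}
          rw [← hloc T₀ S _, hop] at hmm
          exact hmm
        have hl0 : (if c = 1 then (2:ℂ) else 1) ≠ 0 := by split <;> norm_num
        have hlc : (if c = 1 then (2:ℂ) else 1) ≠ c := by
          split
          · rename_i hh; rw [hh]; norm_num
          · rename_i hh; exact fun hcc => hh hcc.symm
        exact hxne (pat1 hc0 hsq hl0 hlc hm)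
    -- S is rank-one
    have hee : ⟪e₀, e₀⟫_ℂ ≠ 0 := inner_self_ne_zero.mpr he₀
    have hBform : adjoint S = rankOne ((⟪e₀,e₀⟫_ℂ)⁻¹ • adjoint S e₀) e₀ := by
      ext x
      have hperp : ⟪e₀, x - ((⟪e₀,e₀⟫_ℂ)⁻¹ * ⟪e₀,x⟫_ℂ) • e₀⟫_ℂ = 0 := by
        rw [inner_sub_right, inner_smul_right]
        field_simp
        ring
      have hz := hker _ hperp
      rw [map_sub, map_smul, sub_eq_zero] at hz
      rw [hz, rankOne_apply, smul_smul]
      congr 1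
      ring
    have hSeq : S = rankOne e₀ ((⟪e₀,e₀⟫_ℂ)⁻¹ • adjoint S e₀) := by
      have h5 := congrArg (fun A : H →L[ℂ] H => adjoint A) hBform
      rw [adjoint_adjoint, adjoint_rankOne] at h5
      exact h5
    have hbne : (⟪e₀,e₀⟫_ℂ)⁻¹ • adjoint S e₀ ≠ 0 := by
      intro hc
      have hS0 : S = 0 := by rw [hSeq, hc, rankOne_zero_right]
      rw [hS0, hphi0] at hS
      exact rankOne_ne_zero he₀ hy hS.symm
    refine ⟨(⟪e₀,e₀⟫_ℂ)⁻¹ • adjoint S e₀, hbne, ?_⟩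
    have hb2 := (hν1 _ hbne).2
    rw [← hSeq, hS] at hb2
    exact (rankOne_cancel he₀ hb2.symm)
  -- the central identity
  have hfinal : ∀ (T : H →L[ℂ] H) (q : H), φ T (ν q) = T q := by
    intro T q
    by_cases hq : q = 0
    · rw [hq, hν0, map_zero, map_zero]
    · apply Lleft
      intro p hp l
      have hSp : φ (rankOne p q) = rankOne p (ν q) := hphiRank p q hp hq
      have hL : φ T * adjoint (φ (rankOne p q)) = rankOne (φ T (ν q)) p := by
        rw [hSp, adjoint_rankOne, comp_rankOne]
      have hR : T * adjoint (rankOne p q) = rankOne (T q) p := by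
        rw [adjoint_rankOne, comp_rankOne]
      rw [← hL, ← hR]
      exact hloc T (rankOne p q) l
  -- build the unitary V
  have hkey2 : ∀ w : H, ⟪w, w⟫_ℂ = 0 → w = 0 := fun w hw => inner_self_eq_zero.mp hw
  have hmap_add : ∀ a b : H, ν (a + b) = ν a + ν b := by
    intro a b
    have hz : ⟪ν (a+b) - ν a - ν b, ν (a+b) - ν a - ν b⟫_ℂ = 0 := by
      simp only [inner_sub_left, inner_sub_right, inner_add_left, inner_add_right, hkey]
      ring
    have h0 := hkey2 _ hz
    rw [sub_sub, sub_eq_zero] at h0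
    exact h0
  have hmap_smul : ∀ (γ : ℂ) (a : H), ν (γ • a) = γ • ν a := by
    intro γ a
    have hz : ⟪ν (γ • a) - γ • ν a, ν (γ • a) - γ • ν a⟫_ℂ = 0 := by
      simp only [inner_sub_left, inner_sub_right, inner_smul_left, inner_smul_right, hkey]
      ring
    have h0 := hkey2 _ hz
    rw [sub_eq_zero] at h0
    exact h0
  set V₀ : H →ₗ[ℂ] H :=
    { toFun := ν
      map_add' := hmap_add
      map_smul' := hmap_smul } with hV₀
  have hnorm : ∀ x : H, ‖V₀ x‖ ≤ 1 * ‖x‖ := by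
    intro x
    rw [one_mul]
    have h1 : ⟪ν x, ν x⟫_ℂ = ⟪x, x⟫_ℂ := hkey x x
    rw [inner_self_eq_norm_sq_to_K, inner_self_eq_norm_sq_to_K] at h1
    have h2 : (‖ν x‖:ℝ)^2 = ‖x‖^2 := by exact_mod_cast h1
    have h3 : ‖(V₀ : H →ₗ[ℂ] H) x‖ = ‖ν x‖ := rfl
    rw [h3]
    nlinarith [norm_nonneg (ν x), norm_nonneg x]
  set V : H →L[ℂ] H := V₀.mkContinuous 1 hnorm with hV
  have hVap : ∀ x, V x = ν x := fun x => rfl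
  have hadj1 : adjoint V * V = 1 := by
    ext x
    refine ext_inner_right ℂ (fun z => ?_)
    rw [ContinuousLinearMap.mul_apply, adjoint_inner_left, ContinuousLinearMap.one_apply]
    rw [hVap, hVap]
    exact hkey x z
  have hsurjV : ∀ y : H, ∃ x, V x = y := by
    intro y
    by_cases hy : y = 0
    · exact ⟨0, by rw [hy, map_zero]⟩
    · obtain ⟨b, _, hb2⟩ := hsurjν y hy
      exact ⟨b, by rw [hVap]; exact hb2⟩
  have hadj2 : V * adjoint V = 1 := by
    ext y
    obtain ⟨x, hx⟩ := hsurjV y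
    have h1 : (adjoint V * V) x = x := by rw [hadj1, ContinuousLinearMap.one_apply]
    rw [ContinuousLinearMap.mul_apply, ContinuousLinearMap.one_apply, ← hx]
    rw [ContinuousLinearMap.mul_apply] at h1
    rw [h1]
  refine ⟨V, ⟨hadj1, hadj2⟩, 1, one_ne_zero, fun T => ?_⟩
  ext z
  have h1 : V (adjoint V z) = z := by
    have := congrArg (fun A : H →L[ℂ] H => A z) hadj2
    simpa only [ContinuousLinearMap.mul_apply, ContinuousLinearMap.one_apply] using this
  have h2 : φ T z = T (adjoint V z) := by
    rw [← h1]
    rw [hVap]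
    rw [hfinal T (adjoint V z)]
    rw [← hVap, h1]
  rw [h2]
  simp only [smul_apply, one_smul, ContinuousLinearMap.mul_apply]
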